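/- For every a \in \mathbb{C}, r > 0, and z \in \mathbb{C} with |z - a| > r, one has \exp( -(1/\pi) \int_{D(a,r)} dA(\zeta) / |\zeta - z|^2 ) = 1 - r^2/|z-a|^2, where D(a,r) = \{\zeta \in \mathbb{C} : |\zeta - a| < r\}. -/

import Mathlib

open MeasureTheory Set
open scoped Real

private lemma ang_complex (d : ℂ) (s : ℝ) (h0 : 0 ≤ s) (hs : s < ‖d‖) :
    (∫ θ in (-π)..π,
      (d + s * Complex.exp (θ * Complex.I)) / (d - s * Complex.exp (θ * Complex.I)))
      = 2 * π := by
  have hd : d ≠ 0 := by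
    intro h; rw [h] at hs; simp at hs; linarith
  set c : ℂ := s / d with hc_def
  have hc : ‖c‖ < 1 := by
    rw [hc_def, norm_div, Complex.norm_real, Real.norm_eq_abs, abs_of_nonneg h0, div_lt_one (lt_of_le_of_lt h0 hs)]
    exact hs
  have hce : ∀ θ : ℝ, ‖c * Complex.exp (θ * Complex.I)‖ < 1 := by
    intro θ
    rw [norm_mul, Complex.norm_exp_ofReal_mul_I, mul_one]
    exact hc
  have hne : ∀ θ : ℝ, (1 : ℂ) - c * Complex.exp (θ * Complex.I) ≠ 0 := by
    intro θ h
    have := hce θ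
    rw [sub_eq_zero] at h
    rw [← h] at this
    simp at this
  have hdne : ∀ θ : ℝ, d - s * Complex.exp (θ * Complex.I) ≠ 0 := by
    intro θ h
    have h2 : d - (s : ℂ) * Complex.exp (θ * Complex.I) = d * (1 - c * Complex.exp (θ * Complex.I)) := by
      rw [hc_def]; field_simp
    rw [h2] at h
    exact (mul_ne_zero hd (hne θ)) h
  have hslit : ∀ θ : ℝ, (1 : ℂ) - c * Complex.exp (θ * Complex.I) ∈ Complex.slitPlane := by
    intro θ
    left
    have h1 : (c * Complex.exp (θ * Complex.I)).re ≤ ‖c * Complex.exp (θ * Complex.I)‖ :=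
      Complex.re_le_norm _
    have : ((1 : ℂ) - c * Complex.exp (θ * Complex.I)).re = 1 - (c * Complex.exp (θ * Complex.I)).re := by
      simp
    rw [this]
    linarith [hce θ]
  set Φ : ℝ → ℂ := fun θ => (θ : ℂ) + 2 * Complex.I * Complex.log (1 - c * Complex.exp (θ * Complex.I)) with hΦ
  have key : ∀ θ : ℝ, HasDerivAt Φ
      ((d + s * Complex.exp (θ * Complex.I)) / (d - s * Complex.exp (θ * Complex.I))) θ := by
    intro θ
    set e := Complex.exp (θ * Complex.I) with he
    have hexp : HasDerivAt (fun θ : ℝ => Complex.exp (θ * Complex.I)) (e * Complex.I) θ := by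
      have h1 : HasDerivAt (fun y : ℂ => Complex.exp (y * Complex.I)) (e * Complex.I) (θ : ℂ) := by
        exact ((Complex.hasDerivAt_exp ((θ : ℂ) * Complex.I)).comp (θ : ℂ)
          ((hasDerivAt_id (θ : ℂ)).mul_const Complex.I)).congr_deriv (by simp [he])
      exact h1.comp_ofReal
    have hu : HasDerivAt (fun θ : ℝ => (1 : ℂ) - c * Complex.exp (θ * Complex.I))
        (-(c * (e * Complex.I))) θ := by
      exact ((hasDerivAt_const θ (1 : ℂ)).sub ((hexp).const_mul c)).congr_deriv (by simp)
    have hlog : HasDerivAt (fun θ : ℝ => Complex.log (1 - c * Complex.exp (θ * Complex.I)))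
        ((1 - c * e)⁻¹ * -(c * (e * Complex.I))) θ :=
      by have := (Complex.hasDerivAt_log (hslit θ)).comp θ hu; exact this
    have hid : HasDerivAt (fun θ : ℝ => (θ : ℂ)) 1 θ := by
      exact (Complex.ofRealCLM.hasDerivAt (x := θ)).congr_deriv (by simp)
    have := hid.add (hlog.const_mul (2 * Complex.I))
    refine this.congr_deriv ?_
    have hI : 2 * Complex.I * ((1 - c * e)⁻¹ * -(c * (e * Complex.I))) = 2 * (c * e) * (1 - c * e)⁻¹ := by
      field_simp
      ring_nf
      rw [Complex.I_sq]
      ring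
    rw [hI]
    have hsc : (s : ℂ) = c * d := by rw [hc_def]; field_simp
    rw [hsc]
    have h1 : d + c * d * e = d * (1 + c * e) := by ring
    have h2 : d - c * d * e = d * (1 - c * e) := by ring
    rw [h1, h2]
    rw [mul_div_mul_left _ _ hd]
    field_simp [show 1 - c * e ≠ 0 from hne θ]
    ring
  rw [intervalIntegral.integral_eq_sub_of_hasDerivAt (fun θ _ => key θ) ?_]
  · have hexppi : Complex.exp ((π : ℝ) * Complex.I) = -1 := by
      exact_mod_cast Complex.exp_pi_mul_I
    have hexpmpi : Complex.exp (((-π : ℝ) : ℂ) * Complex.I) = -1 := by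
      push_cast
      rw [neg_mul, Complex.exp_neg, Complex.exp_pi_mul_I]
      norm_num
    rw [hΦ]
    simp only [hexppi, hexpmpi]
    push_cast
    ring
  · apply Continuous.intervalIntegrable
    apply Continuous.div
    · continuity
    · continuity
    · exact fun θ => hdne θ

private lemma ang_real (d : ℂ) (s : ℝ) (h0 : 0 < s) (hs : s < ‖d‖) :
    (∫ θ in Ioo (-π) π, s / ‖(s : ℂ) * Complex.exp (θ * Complex.I) - d‖ ^ 2)
      = 2 * π * s / (‖d‖ ^ 2 - s ^ 2) := by
  have hpos : 0 < ‖d‖ ^ 2 - s ^ 2 := by nlinarith [h0.le.trans hs.le]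
  have hdne : ∀ θ : ℝ, d - (s : ℂ) * Complex.exp (θ * Complex.I) ≠ 0 := by
    intro θ h
    have h2 : ‖(s : ℂ) * Complex.exp (θ * Complex.I)‖ = s := by
      rw [norm_mul, Complex.norm_exp_ofReal_mul_I, mul_one, Complex.norm_real, Real.norm_eq_abs, abs_of_pos h0]
    rw [sub_eq_zero] at h
    rw [← h] at h2
    rw [h2] at hs
    exact lt_irrefl _ hs
  have key : ∀ θ : ℝ,
      s / ‖(s : ℂ) * Complex.exp (θ * Complex.I) - d‖ ^ 2
        = s / (‖d‖ ^ 2 - s ^ 2) *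
          ((d + s * Complex.exp (θ * Complex.I)) / (d - s * Complex.exp (θ * Complex.I))).re := by
    intro θ
    set w : ℂ := (s : ℂ) * Complex.exp (θ * Complex.I) with hw
    have habsw : ‖w‖ = s := by
      rw [hw, norm_mul, Complex.norm_exp_ofReal_mul_I, mul_one, Complex.norm_real, Real.norm_eq_abs, abs_of_pos h0]
    have hre : ((d + w) / (d - w)).re
        = (‖d‖ ^ 2 - s ^ 2) / ‖w - d‖ ^ 2 := by
      rw [Complex.div_re]
      have hnum : (d + w).re * (d - w).re / Complex.normSq (d - w)
            + (d + w).im * (d - w).im / Complex.normSq (d - w)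
          = (Complex.normSq d - Complex.normSq w) / Complex.normSq (d - w) := by
        rw [← add_div]
        congr 1
        simp only [Complex.add_re, Complex.add_im, Complex.sub_re, Complex.sub_im,
          Complex.normSq_apply]
        ring
      rw [hnum, ← Complex.sq_norm, ← Complex.sq_norm, ← Complex.sq_norm, habsw,
        norm_sub_rev d w]
    rw [hre]
    have hne2 : ‖w - d‖ ^ 2 ≠ 0 := by
      have hwd : w - d ≠ 0 := by
        intro h; apply hdne θ; rw [← hw, ← neg_sub, h, neg_zero]
      exact pow_ne_zero 2 ((norm_ne_zero_iff.mpr hwd))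
    field_simp
  calc (∫ θ in Ioo (-π) π, s / ‖(s : ℂ) * Complex.exp (θ * Complex.I) - d‖ ^ 2)
      = ∫ θ in Ioo (-π) π, s / (‖d‖ ^ 2 - s ^ 2) *
          ((d + s * Complex.exp (θ * Complex.I)) / (d - s * Complex.exp (θ * Complex.I))).re := by
        exact setIntegral_congr_fun measurableSet_Ioo (fun θ _ => key θ)
    _ = s / (‖d‖ ^ 2 - s ^ 2) *
          ∫ θ in Ioo (-π) π,
            ((d + s * Complex.exp (θ * Complex.I)) / (d - s * Complex.exp (θ * Complex.I))).re := by
        rw [integral_const_mul]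
    _ = 2 * π * s / (‖d‖ ^ 2 - s ^ 2) := by
        have hcont : Continuous (fun θ : ℝ =>
            (d + s * Complex.exp (θ * Complex.I)) / (d - s * Complex.exp (θ * Complex.I))) := by
          apply Continuous.div
          · continuity
          · continuity
          · exact hdne
        have hint : IntegrableOn (fun θ : ℝ =>
            (d + s * Complex.exp (θ * Complex.I)) / (d - s * Complex.exp (θ * Complex.I)))
            (Ioo (-π) π) volume :=
          (hcont.continuousOn.integrableOn_compact isCompact_Icc).mono_set Ioo_subset_Icc_self
        have hre2 := integral_re hint
        simp only [RCLike.re_to_complex] at hre2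
        rw [hre2]
        have : (∫ θ in Ioo (-π) π,
            (d + s * Complex.exp (θ * Complex.I)) / (d - s * Complex.exp (θ * Complex.I)))
            = 2 * π := by
          rw [← integral_Ioc_eq_integral_Ioo,
            ← intervalIntegral.integral_of_le (by linarith [Real.pi_pos] : -π ≤ π)]
          exact ang_complex d s h0.le hs
        rw [this]
        simp
        ring

private lemma rad (ρ r : ℝ) (hr : 0 < r) (hρ : r < ρ) :
    (∫ s in Ioo (0:ℝ) r, 2 * π * s / (ρ ^ 2 - s ^ 2)) = -π * Real.log (1 - r ^ 2 / ρ ^ 2) := by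
  have hρ0 : 0 < ρ := hr.trans hρ
  have hden : ∀ s ∈ uIcc (0:ℝ) r, ρ ^ 2 - s ^ 2 ≠ 0 := by
    intro s hsmem
    rw [uIcc_of_le hr.le] at hsmem
    have h1 : s ≤ r := hsmem.2
    have h2 : 0 ≤ s := hsmem.1
    nlinarith
  have key : ∀ s ∈ uIcc (0:ℝ) r, HasDerivAt (fun s => -π * Real.log (ρ ^ 2 - s ^ 2))
      (2 * π * s / (ρ ^ 2 - s ^ 2)) s := by
    intro s hsmem
    have h1 : HasDerivAt (fun s : ℝ => ρ ^ 2 - s ^ 2) (-(2 * s)) s := by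
      exact ((hasDerivAt_const s (ρ ^ 2)).sub (hasDerivAt_pow 2 s)).congr_deriv (by norm_num)
    have h2 := (Real.hasDerivAt_log (hden s hsmem)).comp s h1
    have h3 := h2.const_mul (-π)
    refine h3.congr_deriv ?_
    field_simp
  rw [← integral_Ioc_eq_integral_Ioo, ← intervalIntegral.integral_of_le hr.le,
    intervalIntegral.integral_eq_sub_of_hasDerivAt key ?_]
  · have hr2 : 0 < ρ ^ 2 - r ^ 2 := by nlinarith
    have h0 : (0:ℝ) ^ 2 = 0 := by norm_num
    rw [h0, sub_zero]
    have : (1 : ℝ) - r ^ 2 / ρ ^ 2 = (ρ ^ 2 - r ^ 2) / ρ ^ 2 := by field_simp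
    rw [this, Real.log_div (by positivity) (by positivity)]
    ring
  · apply ContinuousOn.intervalIntegrable
    apply ContinuousOn.div
    · exact (continuous_const.mul continuous_id).continuousOn
    · exact ((continuous_const.sub (continuous_pow 2))).continuousOn
    · exact hden

set_option maxHeartbeats 1000000 in
/-- The diagonal exponential transform of the characteristic function of the disk
`D(a,r)`, evaluated at a point `z` outside the closed disk, equals `1 - r²/|z-a|²`. -/
theorem Ediag_disk (a : ℂ) (r : ℝ) (hr : 0 < r) (z : ℂ)
    (hz : r < ‖z - a‖) :
    Real.exp (-(1 / Real.pi) * ∫ ζ in Metric.ball a r, 1 / ‖ζ - z‖ ^ 2) =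
      1 - r ^ 2 / ‖z - a‖ ^ 2 := by
  set d : ℂ := z - a with hd_def
  set ρ : ℝ := ‖d‖ with hρ_def
  have hρ : r < ρ := hz
  have hρ0 : 0 < ρ := hr.trans hρ
  -- the function after translation
  set g : ℂ → ℝ := fun w => 1 / ‖w - d‖ ^ 2 with hg_def
  -- Step A : translation
  have stepA : (∫ ζ in Metric.ball a r, 1 / ‖ζ - z‖ ^ 2)
      = ∫ w in Metric.ball (0:ℂ) r, g w := by
    rw [← integral_indicator measurableSet_ball, ← integral_indicator measurableSet_ball]
    rw [← integral_add_right_eq_self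
      ((Metric.ball a r).indicator (fun ζ => 1 / ‖ζ - z‖ ^ 2)) a]
    congr 1
    funext w
    by_cases hw : w ∈ Metric.ball (0:ℂ) r
    · have hw' : w + a ∈ Metric.ball a r := by
        simpa [Metric.mem_ball, dist_eq_norm] using hw
      rw [indicator_of_mem hw', indicator_of_mem hw]
      have : w + a - z = w - d := by rw [hd_def]; ring
      rw [hg_def, this]
    · have hw' : w + a ∉ Metric.ball a r := by
        simpa [Metric.mem_ball, dist_eq_norm] using hw
      rw [indicator_of_notMem hw', indicator_of_notMem hw]
  -- Step B : polar coordinates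
  set G : ℝ × ℝ → ℝ := fun p => p.1 / ‖(p.1 : ℂ) * Complex.exp (p.2 * Complex.I) - d‖ ^ 2
    with hG_def
  set S : Set (ℝ × ℝ) := Ioo (0:ℝ) r ×ˢ Ioo (-π) π with hS_def
  have hSsub : S ⊆ Complex.polarCoord.target := by
    rw [hS_def, Complex.polarCoord_target]
    exact Set.prod_mono (Ioo_subset_Ioi_self) subset_rfl
  have stepB : (∫ w in Metric.ball (0:ℂ) r, g w) = ∫ p in S, G p := by
    rw [← integral_indicator measurableSet_ball,
      ← Complex.integral_comp_polarCoord_symm ((Metric.ball (0:ℂ) r).indicator g)]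
    have hSmeas : MeasurableSet S := by
      rw [hS_def]; exact measurableSet_Ioo.prod measurableSet_Ioo
    have hrhs : (∫ p in S, G p) = ∫ p in Complex.polarCoord.target, S.indicator G p := by
      rw [setIntegral_indicator hSmeas, Set.inter_eq_self_of_subset_right hSsub]
    rw [hrhs]
    apply setIntegral_congr_fun (Complex.polarCoord.open_target.measurableSet)
    intro p hp
    rw [Complex.polarCoord_target] at hp
    obtain ⟨hp1, hp2⟩ := hp
    have hp1' : (0:ℝ) < p.1 := hp1
    have hsymm : Complex.polarCoord.symm p = (p.1 : ℂ) * Complex.exp (p.2 * Complex.I) := by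
      rw [Complex.polarCoord_symm_apply, Complex.exp_mul_I]
      push_cast
      ring
    have habs : ‖Complex.polarCoord.symm p‖ = p.1 := by
      rw [Complex.norm_polarCoord_symm, abs_of_pos hp1']
    show p.1 • (Metric.ball (0:ℂ) r).indicator g (Complex.polarCoord.symm p) = S.indicator G p
    by_cases hcase : p.1 < r
    · have hmem : Complex.polarCoord.symm p ∈ Metric.ball (0:ℂ) r := by
        rw [Metric.mem_ball, dist_zero_right, habs]; exact hcase
      have hmemS : p ∈ S := by
        rw [hS_def]
        exact ⟨⟨hp1', hcase⟩, hp2⟩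
      rw [indicator_of_mem hmem, indicator_of_mem hmemS, hG_def, hg_def, hsymm]
      simp only [smul_eq_mul]
      rw [mul_one_div]
    · have hmem : Complex.polarCoord.symm p ∉ Metric.ball (0:ℂ) r := by
        rw [Metric.mem_ball, dist_zero_right, habs]; exact hcase
      have hmemS : p ∉ S := by
        rw [hS_def]
        intro h
        exact hcase h.1.2
      rw [indicator_of_notMem hmem, indicator_of_notMem hmemS, smul_zero]
  -- Integrability of G on S
  have hSmeas : MeasurableSet S := by
    rw [hS_def]; exact measurableSet_Ioo.prod measurableSet_Ioo
  have hcontden : Continuous (fun p : ℝ × ℝ =>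
      ‖(p.1 : ℂ) * Complex.exp ((p.2 : ℂ) * Complex.I) - d‖ ^ 2) := by
    continuity
  have hGmeas : AEStronglyMeasurable G volume := by
    rw [hG_def]
    exact (measurable_fst.div hcontden.measurable).aestronglyMeasurable
  have hSfin : volume S ≠ ⊤ := by
    rw [hS_def, Measure.volume_eq_prod, Measure.prod_prod, Real.volume_Ioo, Real.volume_Ioo]
    exact ENNReal.mul_ne_top ENNReal.ofReal_ne_top ENNReal.ofReal_ne_top
  have hbound : ∀ᵐ p ∂(volume.restrict S), ‖G p‖ ≤ r / (ρ - r) ^ 2 := by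
    filter_upwards [ae_restrict_mem hSmeas] with p hp
    rw [hS_def] at hp
    obtain ⟨⟨hp0, hpr⟩, -⟩ := hp
    set w : ℂ := (p.1 : ℂ) * Complex.exp ((p.2 : ℂ) * Complex.I) with hw
    have habsw : ‖w‖ = p.1 := by
      rw [hw, norm_mul, Complex.norm_exp_ofReal_mul_I, mul_one, Complex.norm_real, Real.norm_eq_abs,
        abs_of_pos hp0]
    have hlow : ρ - p.1 ≤ ‖w - d‖ := by
      have h1 : ‖d‖ - ‖w‖ ≤ ‖w - d‖ :=
        le_of_le_of_eq (norm_sub_norm_le d w) (norm_sub_rev d w)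
      rw [habsw] at h1
      rw [hρ_def]
      linarith
    have hlow2 : (0:ℝ) < ρ - r := by linarith
    have hlow3 : (ρ - r) ^ 2 ≤ ‖w - d‖ ^ 2 := by
      apply pow_le_pow_left₀ hlow2.le
      linarith
    have hGeval : G p = p.1 / ‖w - d‖ ^ 2 := by rw [hG_def]
    rw [hGeval, Real.norm_eq_abs, abs_of_nonneg (by positivity)]
    exact div_le_div₀ hr.le hpr.le (by positivity) hlow3
  have hGint : IntegrableOn G S volume :=
    Measure.integrableOn_of_bounded hSfin hGmeas hbound
  -- Fubini
  have stepE : (∫ p in S, G p) = ∫ s in Ioo (0:ℝ) r, ∫ θ in Ioo (-π) π, G (s, θ) := by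
    rw [hS_def, Measure.volume_eq_prod, setIntegral_prod]
    rwa [hS_def, Measure.volume_eq_prod] at hGint
  -- inner integral
  have stepF : (∫ s in Ioo (0:ℝ) r, ∫ θ in Ioo (-π) π, G (s, θ))
      = ∫ s in Ioo (0:ℝ) r, 2 * π * s / (ρ ^ 2 - s ^ 2) := by
    apply setIntegral_congr_fun measurableSet_Ioo
    intro s hs
    have := ang_real d s hs.1 (hs.2.trans hρ)
    simpa [hG_def, hρ_def] using this
  have hT : (∫ ζ in Metric.ball a r, 1 / ‖ζ - z‖ ^ 2)
      = -π * Real.log (1 - r ^ 2 / ρ ^ 2) := by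
    rw [stepA, stepB, stepE, stepF, rad ρ r hr hρ]
  rw [hT]
  have hx : (0:ℝ) < 1 - r ^ 2 / ρ ^ 2 := by
    have : r ^ 2 / ρ ^ 2 < 1 := by
      rw [div_lt_one (by positivity)]
      nlinarith
    linarith
  have harg : -(1 / Real.pi) * (-π * Real.log (1 - r ^ 2 / ρ ^ 2))
      = Real.log (1 - r ^ 2 / ρ ^ 2) := by
    field_simp
  rw [harg, Real.exp_log hx]
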